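/- Under the same partition strategy, strong conditional BDM never exceeds coarse conditional BDM: if the conditional estimate CCTM satisfies CCTM(r,r) = 0 for every base block r and CCTM(r,s) ≤ CTM r for all base blocks r, s, and if the support of n_Y is nonempty, then there exists a pairing P : R → R mapping supp n_X into supp n_Y whose strong conditional value ∑_{r ∈ supp n_X} (CCTM(r, P r) + f(n_X r, n_Y (P r))) is at most the coarse conditional BDM(X|Y); consequently the minimum of this sum over all such pairings is at most BDM(X|Y). -/
import Mathlib


open Finsupp

/-- The multiplicity correction term: `f n m = 0` if `n = m`, else `log n`. -/
noncomputable def bdmF (n m : ℕ) : ℝ := if n = m then 0 else Real.log n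

/-- The (unconditional) BDM of a decomposed object given by its multiplicity function. -/
noncomputable def BDM {R : Type*} (CTM : R → ℝ) (X : R →₀ ℕ) : ℝ :=
  ∑ r ∈ X.support, (CTM r + Real.log (X r))

/-- The coarse conditional BDM of `X` given `Y`. -/
noncomputable def condBDM {R : Type*} [DecidableEq R] (CTM : R → ℝ) (X Y : R →₀ ℕ) : ℝ :=
  ∑ r ∈ X.support \ Y.support, (CTM r + Real.log (X r)) +
  ∑ r ∈ X.support ∩ Y.support, bdmF (X r) (Y r)


/-- Strong conditional BDM never exceeds coarse conditional BDM: if the conditional estimate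
`CCTM` vanishes on the diagonal and is dominated by `CTM`, and the support of `Y` is nonempty,
then there is a pairing `P` mapping the support of `X` into the support of `Y` whose
strong conditional value is at most the coarse conditional `BDM(X|Y)`; consequently the
minimum of this sum over all such pairings is at most `BDM(X|Y)`. -/
theorem strong_le_coarse {R : Type*} [DecidableEq R] (CTM : R → ℝ) (CCTM : R × R → ℝ)
    (hdiag : ∀ r, CCTM (r, r) = 0) (hdom : ∀ r s, CCTM (r, s) ≤ CTM r)
    (X Y : R →₀ ℕ) (hY : Y.support.Nonempty) :
    ∃ P : R → R, (∀ r ∈ X.support, P r ∈ Y.support) ∧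
      ∑ r ∈ X.support, (CCTM (r, P r) + bdmF (X r) (Y (P r))) ≤ condBDM CTM X Y := by
  obtain ⟨y₀, hy₀⟩ := hY
  refine ⟨fun r => if r ∈ Y.support then r else y₀, fun r hr => ?_, ?_⟩
  · by_cases h : r ∈ Y.support <;> simp [h, hy₀]
  · have hsplit : X.support = (X.support \ Y.support) ∪ (X.support ∩ Y.support) := by
      ext r; by_cases h : r ∈ Y.support <;> simp [h]
    rw [hsplit, Finset.sum_union (Finset.disjoint_sdiff_inter X.support Y.support), condBDM]
    apply add_le_add <;> apply Finset.sum_le_sum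
    · intro r hr
      simp only [Finset.mem_sdiff, Finsupp.mem_support_iff] at hr
      have hnm : ¬ r ∈ Y.support := by simp [Finsupp.mem_support_iff, hr.2]
      simp only [hnm, if_false]
      gcongr
      · exact hdom r y₀
      · unfold bdmF
        have h1 : (1 : ℝ) ≤ (X r : ℝ) := by
          exact_mod_cast Nat.one_le_iff_ne_zero.mpr hr.1
        split
        · exact Real.log_nonneg h1
        · exact le_refl _
    · intro r hr
      simp only [Finset.mem_inter] at hr
      simp [hr.2, hdiag]
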